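/- (Noiseless separation/identifiability, eq. (8).) Let f_1, …, f_t be polynomials of degree < K with Reed–Solomon codewords c^(1), …, c^(t), let Y be their indicator matrix, and let M = d·Y for a positive integer d. Suppose t·(K−1) ≤ N−1. Then for every polynomial g of degree < K: ⟨W_{c_g}, M⟩ ≥ dN if and only if c_g ∈ {c^(1), …, c^(t)}; moreover, if c_g ∉ {c^(1), …, c^(t)} then ⟨W_{c_g}, M⟩ ≤ d·t·(K−1) < dN. -/

import Mathlib

/-- noiseless separation/identifiability, eq. (8): If
`t(K−1) ≤ N−1`, then for every polynomial `g` of degree `< K`: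
`⟨W_{c_g}, M⟩ ≥ dN` iff `c_g ∈ {c⁽¹⁾, …, c⁽ᵗ⁾}`; moreover if
`c_g ∉ {c⁽¹⁾, …, c⁽ᵗ⁾}` then `⟨W_{c_g}, M⟩ ≤ d·t·(K−1) < dN`. -/
theorem stmt11 (F : Type) [Field F] [Fintype F] [DecidableEq F]
    (K N t : ℕ) (hK : 1 ≤ K) (hN : 1 ≤ N)
    (x : Fin N → F) (hx : Function.Injective x)
    (f : Fin t → Polynomial F) (hf : ∀ i, (f i).degree < K)
    (c : Fin t → Fin N → F) (hc : ∀ i j, c i j = Polynomial.eval (x j) (f i))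
    (W : (Fin N → F) → F → Fin N → ℕ)
    (hW : ∀ (cw : Fin N → F) (α : F) (j : Fin N), W cw α j = if cw j = α then 1 else 0)
    (Y : F → Fin N → ℕ)
    (hY : ∀ (α : F) (j : Fin N), Y α j = if ∃ i, c i j = α then 1 else 0)
    (d : ℕ) (hd : 1 ≤ d)
    (htK : t * (K - 1) ≤ N - 1) :
    ∀ (g : Polynomial F), g.degree < K →
      ∀ (cg : Fin N → F), (∀ j, cg j = Polynomial.eval (x j) g) →
        ((d * N ≤ ∑ α : F, ∑ j : Fin N, W cg α j * (d * Y α j)) ↔ ∃ i, cg = c i) ∧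
        ((¬ ∃ i, cg = c i) →
          (∑ α : F, ∑ j : Fin N, W cg α j * (d * Y α j)) ≤ d * (t * (K - 1)) ∧
          d * (t * (K - 1)) < d * N) := by
  intro g hg cg hcg
  -- rewrite the sum as d * card of matching positions
  set S : Finset (Fin N) := Finset.univ.filter (fun j => ∃ i, c i j = cg j) with hS
  have hsum : (∑ α : F, ∑ j : Fin N, W cg α j * (d * Y α j)) = d * S.card := by
    rw [Finset.sum_comm]
    have : ∀ j : Fin N, (∑ α : F, W cg α j * (d * Y α j))
        = d * (if ∃ i, c i j = cg j then 1 else 0) := by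
      intro j
      rw [Finset.sum_eq_single (cg j)]
      · rw [hW, hY]; simp
      · intro b _ hb
        rw [hW]; simp [Ne.symm hb]
      · simp
    simp only [this]
    rw [← Finset.mul_sum, hS, Finset.card_filter]
  rw [hsum]
  -- key bound when cg is not one of the c i
  have hbound : (¬ ∃ i, cg = c i) → S.card ≤ t * (K - 1) := by
    intro hno
    have hsub : S ⊆ Finset.univ.biUnion
        (fun i : Fin t => Finset.univ.filter (fun j => c i j = cg j)) := by
      intro j hj
      rw [hS, Finset.mem_filter] at hj
      obtain ⟨_, i, hi⟩ := hj
      exact Finset.mem_biUnion.2 ⟨i, Finset.mem_univ i, Finset.mem_filter.2 ⟨Finset.mem_univ j, hi⟩⟩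
    calc S.card ≤ _ := Finset.card_le_card hsub
      _ ≤ ∑ i : Fin t, (Finset.univ.filter (fun j => c i j = cg j)).card :=
          Finset.card_biUnion_le
      _ ≤ ∑ _i : Fin t, (K - 1) := by
          apply Finset.sum_le_sum
          intro i _
          -- f i ≠ g
          have hne : f i - g ≠ 0 := by
            intro h
            apply hno
            refine ⟨i, funext fun j => ?_⟩
            rw [hcg j, hc i j, sub_eq_zero.mp h]
          have hdeg : (f i - g).natDegree ≤ K - 1 := by
            have : (f i - g).degree < K := lt_of_le_of_lt (Polynomial.degree_sub_le _ _)
              (max_lt (hf i) hg)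
            have := (Polynomial.natDegree_lt_iff_degree_lt hne).2
              (by simpa using this)
            omega
          -- injective map into roots
          have : (Finset.univ.filter (fun j => c i j = cg j)).card
              ≤ (f i - g).roots.toFinset.card := by
            apply Finset.card_le_card_of_injOn x
            · intro j hj
              rw [Finset.mem_coe, Finset.mem_filter] at hj
              rw [Finset.mem_coe, Multiset.mem_toFinset, Polynomial.mem_roots hne,
                Polynomial.IsRoot, Polynomial.eval_sub, sub_eq_zero, ← hc i j, ← hcg j]
              exact hj.2
            · exact fun a _ b _ h => hx h
          calc (Finset.univ.filter (fun j => c i j = cg j)).card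
              ≤ (f i - g).roots.toFinset.card := this
            _ ≤ Multiset.card (f i - g).roots := Multiset.toFinset_card_le _
            _ ≤ (f i - g).natDegree := Polynomial.card_roots' _
            _ ≤ K - 1 := hdeg
      _ = t * (K - 1) := by simp [Finset.sum_const, mul_comm]
  have hlt : d * (t * (K - 1)) < d * N := by
    have h1 : t * (K - 1) < N := by omega
    exact Nat.mul_lt_mul_of_le_of_lt (le_refl d) h1 (by omega)
  constructor
  · constructor
    · intro hge
      by_contra hno
      have := hbound hno
      have : d * S.card ≤ d * (t * (K - 1)) := Nat.mul_le_mul_left d this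
      omega
    · rintro ⟨i, hi⟩
      have : S = Finset.univ := by
        rw [hS]
        ext j
        simp only [Finset.mem_filter, Finset.mem_univ, true_and, iff_true]
        exact ⟨i, (congrFun hi j).symm⟩
      rw [this]
      simp
  · intro hno
    exact ⟨Nat.mul_le_mul_left d (hbound hno), hlt⟩
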